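/- arXiv:0806.1118 — 8 statements merged into one kernel-verified Lean document; each statement's English description precedes it below -/
import Mathlib

section
/- In the braid group B_3 (generated by a_1, a_2 with relation a_2 a_1 a_2 = a_1 a_2 a_1), for every integer l ≥ 2 the relation a_2 a_1^l a_2 a_1 = a_1 a_2 a_1^2 a_2^{l-1} holds. -/
/-- In the braid group B₃ (generated by a₁, a₂ with relation a₂a₁a₂ = a₁a₂a₁),
for every l ≥ 2, a₂ a₁^l a₂ a₁ = a₁ a₂ a₁² a₂^(l-1). -/
theorem braid3_gs_relation {G : Type*} [Group G] (a1 a2 : G)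
    (hbraid : a2 * a1 * a2 = a1 * a2 * a1) (l : ℕ) (hl : 2 ≤ l) :
    a2 * a1 ^ l * a2 * a1 = a1 * a2 * a1 ^ 2 * a2 ^ (l - 1) := by
  have hb : ∀ x : G, a2 * (a1 * (a2 * x)) = a1 * (a2 * (a1 * x)) := by
    intro x
    calc a2 * (a1 * (a2 * x)) = (a2 * a1 * a2) * x := by group
    _ = (a1 * a2 * a1) * x := by rw [hbraid]
    _ = a1 * (a2 * (a1 * x)) := by group
  have key : ∀ x : G, a2 * (a1 * (a1 * (a2 * (a1 * (a1 * x)))))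
      = a1 * (a1 * (a2 * (a1 * (a1 * (a2 * x))))) := by
    intro x
    calc a2 * (a1 * (a1 * (a2 * (a1 * (a1 * x)))))
        = a2 * (a1 * (a2 * (a1 * (a2 * (a1 * x))))) := by rw [(hb (a1 * x)).symm]
      _ = a1 * (a2 * (a1 * (a1 * (a2 * (a1 * x))))) := hb _
      _ = a1 * (a2 * (a1 * (a2 * (a1 * (a2 * x))))) := by rw [(hb x).symm]
      _ = a1 * (a1 * (a2 * (a1 * (a1 * (a2 * x))))) := by rw [hb (a1 * (a2 * x))]
  have e : a2 * a1 = a1⁻¹ * (a2 * a1 * a2) := by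
    rw [hbraid]; group
  have h1 : ∀ x : G, a2 * (a1 * (a2⁻¹ * x)) = a1⁻¹ * (a2 * (a1 * x)) := by
    intro x
    calc a2 * (a1 * (a2⁻¹ * x)) = (a2 * a1) * (a2⁻¹ * x) := by group
      _ = (a1⁻¹ * (a2 * a1 * a2)) * (a2⁻¹ * x) := by rw [← e]
      _ = a1⁻¹ * (a2 * (a1 * x)) := by group
  induction l, hl using Nat.le_induction with
  | base =>
      calc a2 * a1 ^ 2 * a2 * a1
          = a2 * (a1 * (a1 * (a2 * a1))) := by rw [pow_two]; simp [mul_assoc]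
        _ = a2 * (a1 * (a2 * (a1 * a2))) := by
            rw [show a1 * (a2 * a1) = a2 * (a1 * a2) by
                  have h := hbraid; rw [mul_assoc, mul_assoc] at h; rw [← h]]
        _ = a1 * (a2 * (a1 * (a1 * a2))) := hb _
        _ = a1 * a2 * a1 ^ 2 * a2 ^ (2 - 1) := by rw [pow_two]; simp [mul_assoc]
  | succ l hl ih =>
      calc a2 * a1 ^ (l + 1) * a2 * a1
          = a2 * (a1 * (a2⁻¹ * (a2 * a1 ^ l * a2 * a1))) := by
            rw [pow_succ']; simp [mul_assoc]
        _ = a2 * (a1 * (a2⁻¹ * (a1 * a2 * a1 ^ 2 * a2 ^ (l - 1)))) := by rw [ih]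
        _ = a1⁻¹ * (a2 * (a1 * (a1 * a2 * a1 ^ 2 * a2 ^ (l - 1)))) := h1 _
        _ = a1⁻¹ * (a2 * (a1 * (a1 * (a2 * (a1 * (a1 * a2 ^ (l - 1))))))) := by
            rw [pow_two]; simp [mul_assoc]
        _ = a1⁻¹ * (a1 * (a1 * (a2 * (a1 * (a1 * (a2 * a2 ^ (l - 1))))))) := by
            rw [key]
        _ = a1 * (a2 * (a1 * (a1 * (a2 * a2 ^ (l - 1))))) := by simp [mul_assoc]
        _ = a1 * a2 * a1 ^ 2 * a2 ^ (l + 1 - 1) := by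
            rw [pow_two, show l + 1 - 1 = (l - 1) + 1 from by omega, pow_succ' a2]
            simp [mul_assoc]
end

section
/- In the braid group B_{n+1}, for indices j ≤ s ≤ i < n, the Garside formula a_s · (a_{i+1} a_i ⋯ a_j) = (a_{i+1} a_i ⋯ a_j) · a_{s+1} holds, where a_{i+1} a_i ⋯ a_j denotes the descending product of generators from index i+1 down to j. -/
/-- The descending product a_i a_{i-1} ⋯ a_j (equal to 1 if i < j). -/
def descProd {M : Type*} [Monoid M] (a : ℕ → M) (i j : ℕ) : M :=
  (((List.range' j (i + 1 - j)).reverse).map a).prod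

lemma descProd_commute {M : Type*} [Monoid M] (a : ℕ → M) (x : M) (i j : ℕ)
    (h : ∀ k, j ≤ k → k ≤ i → Commute x (a k)) : Commute x (descProd a i j) := by
  apply Commute.list_prod_right
  intro y hy
  simp only [List.mem_map, List.mem_reverse, List.mem_range'_1] at hy
  obtain ⟨k, ⟨hk1, hk2⟩, rfl⟩ := hy
  exact h k hk1 (by omega)

lemma descProd_split {M : Type*} [Monoid M] (a : ℕ → M) (i j k : ℕ)
    (hk : 1 ≤ k) (hjk : j ≤ k) (hki : k ≤ i + 1) :
    descProd a i j = descProd a i k * descProd a (k - 1) j := by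
  unfold descProd
  rw [← List.prod_append, ← List.map_append, ← List.reverse_append]
  congr 2
  rw [show k - 1 + 1 - j = k - j by omega]
  have := List.range'_append_1 (s := j) (m := k - j) (n := i + 1 - k)
  rw [show j + (k - j) = k by omega, show k - j + (i + 1 - k) = i + 1 - j by omega] at this
  rw [this]

lemma descProd_peel {M : Type*} [Monoid M] (a : ℕ → M) (i j : ℕ) (h1 : 1 ≤ i) (hj : j ≤ i) :
    descProd a i j = a i * descProd a (i - 1) j := by
  rw [descProd_split a i j i h1 hj (by omega)]
  congr 1
  unfold descProd
  rw [show i + 1 - i = 1 by omega]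
  simp

/-- Garside's formula in B_{n+1}: for j ≤ s ≤ i < n,
a_s · (a_{i+1} a_i ⋯ a_j) = (a_{i+1} a_i ⋯ a_j) · a_{s+1}. -/
theorem braid_garside_formula {G : Type*} [Group G] (n : ℕ) (a : ℕ → G)
    (hbraid : ∀ i, 1 ≤ i → i + 1 ≤ n → a (i + 1) * a i * a (i + 1) = a i * a (i + 1) * a i)
    (hcomm : ∀ i j, 1 ≤ j → j + 2 ≤ i → i ≤ n → a i * a j = a j * a i)
    (i j s : ℕ) (hj : 1 ≤ j) (hjs : j ≤ s) (hsi : s ≤ i) (hin : i + 1 ≤ n) :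
    a s * descProd a (i + 1) j = descProd a (i + 1) j * a (s + 1) := by
  have hsplit : descProd a (i + 1) j
      = descProd a (i + 1) (s + 2) * (a (s + 1) * (a s * descProd a (s - 1) j)) := by
    rw [descProd_split a (i + 1) j (s + 2) (by omega) (by omega) (by omega),
      show s + 2 - 1 = s + 1 by omega,
      descProd_peel a (s + 1) j (by omega) (by omega), show s + 1 - 1 = s by omega,
      descProd_peel a s j (by omega) hjs]
  have c1 : Commute (a s) (descProd a (i + 1) (s + 2)) := by
    apply descProd_commute
    intro k hk1 hk2
    exact (hcomm k s (by omega) (by omega) (by omega)).symm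
  have c2 : Commute (a (s + 1)) (descProd a (s - 1) j) := by
    apply descProd_commute
    intro k hk1 hk2
    exact hcomm (s + 1) k (by omega) (by omega) (by omega)
  rw [hsplit, ← mul_assoc, c1.eq, mul_assoc, mul_assoc]
  congr 1
  rw [← mul_assoc, ← mul_assoc, ← mul_assoc]
  rw [← hbraid s (by omega) (by omega)]
  rw [mul_assoc, mul_assoc, c2.eq, ← mul_assoc, ← mul_assoc]
end

section
/- In the braid group B_{n+1}, for any i with 1 ≤ i ≤ n−1, any l ≥ 2 and any j ≤ i, the relation a_{i+1} a_i^l a_{i+1} a_i = a_i a_{i+1} a_i^2 a_{i+1}^{l-1} holds. -/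
private lemma braid_conj_pow {G : Type*} [Group G] (a b : G)
    (h : b * a * b = a * b * a) : ∀ l : ℕ, a * b * a ^ l = b ^ l * (a * b) := by
  intro l
  induction l with
  | zero => simp
  | succ k ih =>
    calc a * b * a ^ (k + 1) = (a * b * a ^ k) * a := by rw [pow_succ]; group
    _ = b ^ k * (a * b * a) := by rw [ih]; group
    _ = b ^ k * (b * (a * b)) := by rw [← h]; group
    _ = b ^ (k + 1) * (a * b) := by rw [pow_succ]; group

/-- In B_{n+1}, for 1 ≤ i ≤ n-1 and l ≥ 2:
a_{i+1} a_i^l a_{i+1} a_i = a_i a_{i+1} a_i² a_{i+1}^(l-1). -/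
theorem braid_power_relation {G : Type*} [Group G] (n : ℕ) (a : ℕ → G)
    (hbraid : ∀ i, 1 ≤ i → i + 1 ≤ n → a (i + 1) * a i * a (i + 1) = a i * a (i + 1) * a i)
    (hcomm : ∀ i j, 1 ≤ j → j + 2 ≤ i → i ≤ n → a i * a j = a j * a i)
    (i l : ℕ) (hi : 1 ≤ i) (hin : i + 1 ≤ n) (hl : 2 ≤ l) :
    a (i + 1) * a i ^ l * a (i + 1) * a i
      = a i * a (i + 1) * a i ^ 2 * a (i + 1) ^ (l - 1) := by
  set A := a i
  set B := a (i + 1)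
  have h1 : B * A * B = A * B * A := hbraid i hi hin
  have hBA := braid_conj_pow B A h1.symm
  have hl1 : l - 1 + 1 = l := by omega
  calc B * A ^ l * B * A
      = B * (A ^ l * (B * A)) := by group
    _ = B * (B * A * B ^ l) := by rw [← hBA]
    _ = B * (B * A * B) * B ^ (l - 1) := by
        rw [show B ^ l = B * B ^ (l - 1) by rw [← pow_succ', hl1]]; group
    _ = B * (A * B * A) * B ^ (l - 1) := by rw [h1]
    _ = B * A * B * (A * B ^ (l - 1)) := by group
    _ = A * B * A * (A * B ^ (l - 1)) := by rw [h1]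
    _ = A * B * A ^ 2 * B ^ (l - 1) := by rw [sq]; group
end

section
/- In the braid group B_3, for all integers l, k ≥ 2, the two ways of rewriting a_2 a_1^l a_2 a_1^k a_2 a_1 using the relations a_2 a_1^m a_2 a_1 = a_1 a_2 a_1^2 a_2^{m-1} (applied to the left occurrence with m = l and to the right occurrence with m = k) yield equal elements; concretely, a_2 a_1^{l+1} a_2 a_1^2 a_2^{k-1} = a_1 a_2 a_1^2 a_2^{l-1} a_1^{k-1} a_2 a_1 in B_3. -/
/-- In B₃, for l, k ≥ 2:
a₂ a₁^(l+1) a₂ a₁² a₂^(k-1) = a₁ a₂ a₁² a₂^(l-1) a₁^(k-1) a₂ a₁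
(triviality of the composition on the ambiguity a₂ a₁^l a₂ a₁^k a₂ a₁). -/
theorem braid3_composition_trivial {G : Type*} [Group G] (a1 a2 : G)
    (hbraid : a2 * a1 * a2 = a1 * a2 * a1) (l k : ℕ) (hl : 2 ≤ l) (hk : 2 ≤ k) :
    a2 * a1 ^ (l + 1) * a2 * a1 ^ 2 * a2 ^ (k - 1)
      = a1 * a2 * a1 ^ 2 * a2 ^ (l - 1) * a1 ^ (k - 1) * a2 * a1 := by
  have key : ∀ n : ℕ, a2 * a1 ^ (n + 1) * a2 * a1 = a1 * a2 * a1 ^ 2 * a2 ^ n := by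
    intro n
    induction n with
    | zero =>
      simp only [zero_add, pow_one, pow_zero, mul_one]
      rw [hbraid, pow_two]; group
    | succ n ih =>
      have h : a2 * a1 ^ (n + 1 + 1) * a2 * a1
          = a2 * a1 ^ (n + 1) * (a1 * a2 * a1) := by group
      rw [h, ← hbraid]
      have h2 : a2 * a1 ^ (n + 1) * (a2 * a1 * a2)
          = a2 * a1 ^ (n + 1) * a2 * a1 * a2 := by group
      rw [h2, ih]; group
  obtain ⟨l', rfl⟩ : ∃ l', l = l' + 2 := ⟨l - 2, by omega⟩
  obtain ⟨k', rfl⟩ : ∃ k', k = k' + 2 := ⟨k - 2, by omega⟩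
  simp only [show l' + 2 - 1 = l' + 1 from rfl, show k' + 2 - 1 = k' + 1 from rfl]
  have h1 := key (k' + 1)
  have h2 := key (l' + 1)
  have hL : a2 * a1 ^ (l' + 2 + 1) * a2 * a1 ^ 2 * a2 ^ (k' + 1)
      = a2 * a1 ^ (l' + 2) * (a2 * a1 ^ (k' + 1 + 1) * a2 * a1) := by
    rw [h1]; group
  have hR : a1 * a2 * a1 ^ 2 * a2 ^ (l' + 1) * a1 ^ (k' + 1) * a2 * a1
      = a2 * a1 ^ (l' + 2) * (a2 * a1 ^ (k' + 1 + 1) * a2 * a1) := by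
    rw [← h2]; group
  exact hL.trans hR.symm
end

section
/- In the braid monoid B_{n+1}^+ (positive braids), for j ≤ i+1 and any exponent vector p = (p_0, …, p_{i-j+1}) of positive integers, the relation a_i^{p_0} a_{i-1}^{p_1} ⋯ a_{j-1}^{p_{i-j+1}} · (a_{i+1} a_i ⋯ a_{j-1}) = (a_{i+1} a_i ⋯ a_{j-1}) · a_{i+1}^{p_0} a_i^{p_1} ⋯ a_j^{p_{i-j+1}} holds. -/
/-- The descending product with exponents: a_i^{p₀} a_{i-1}^{p₁} ⋯ a_j^{p_{i-j}}. -/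
def descPow {M : Type*} [Monoid M] (a : ℕ → M) (p : ℕ → ℕ) (i j : ℕ) : M :=
  (((List.range' j (i + 1 - j)).reverse).map (fun m => a m ^ p (i - m))).prod

section Aux
variable {M : Type*} [Monoid M] (a : ℕ → M)

lemma descProd_split_s7 (i k j : ℕ) (h1 : j ≤ k + 1) (h2 : k ≤ i) :
    descProd a i j = descProd a i (k + 1) * descProd a k j := by
  unfold descProd
  have h : List.range' j (k + 1 - j) ++ List.range' (k + 1) (i + 1 - (k + 1))
      = List.range' j (i + 1 - j) := by
    have := List.range'_append (s := j) (m := k + 1 - j) (n := i + 1 - (k + 1)) (step := 1)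
    rw [one_mul] at this
    rw [show j + (k + 1 - j) = k + 1 by omega] at this
    rw [show k + 1 - j + (i + 1 - (k + 1)) = i + 1 - j by omega] at this
    exact this
  rw [← h, List.reverse_append, List.map_append, List.prod_append]

lemma descProd_pop_top (i j : ℕ) (h : j ≤ i + 1) :
    descProd a (i + 1) j = a (i + 1) * descProd a i j := by
  unfold descProd
  rw [show i + 1 + 1 - j = (i + 1 - j) + 1 by omega, List.range'_concat,
    show j + 1 * (i + 1 - j) = i + 1 by omega, List.reverse_append, List.map_append,
    List.prod_append]
  simp

lemma key_swap (n : ℕ)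
    (hbraid : ∀ i, 1 ≤ i → i + 1 ≤ n → a (i + 1) * a i * a (i + 1) = a i * a (i + 1) * a i)
    (hcomm : ∀ i j, 1 ≤ j → j + 2 ≤ i → i ≤ n → a i * a j = a j * a i)
    (i j m : ℕ) (hj : 1 ≤ j) (hm1 : j ≤ m) (hm2 : m ≤ i) (hin : i + 1 ≤ n) :
    a m * descProd a (i + 1) j = descProd a (i + 1) j * a (m + 1) := by
  have hsplit : descProd a (i + 1) j
      = descProd a (i + 1) (m + 2) * (a (m + 1) * (a m * descProd a (m - 1) j)) := by
    rw [descProd_split_s7 a (i + 1) (m + 1) j (by omega) (by omega),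
      descProd_pop_top a m j (by omega)]
    rcases Nat.exists_eq_add_of_le hm1 with ⟨c, rfl⟩
    rcases c with _ | c
    · have h0 : j - 1 + 1 - j = 0 := by omega
      simp [descProd, h0, mul_assoc]
    · rw [show j + (c + 1) = (j + c) + 1 from rfl, descProd_pop_top a (j + c) j (by omega)]
      simp [mul_assoc]
  have hU : Commute (a m) (descProd a (i + 1) (m + 2)) := by
    apply Commute.list_prod_right
    intro x hx
    simp only [List.mem_map, List.mem_reverse] at hx
    obtain ⟨y, hy, rfl⟩ := hx
    rw [List.mem_range'] at hy
    obtain ⟨t, ht, rfl⟩ := hy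
    exact Commute.symm (hcomm _ m (by omega) (by omega) (by omega))
  have hL : Commute (a (m + 1)) (descProd a (m - 1) j) := by
    apply Commute.list_prod_right
    intro x hx
    simp only [List.mem_map, List.mem_reverse] at hx
    obtain ⟨y, hy, rfl⟩ := hx
    rw [List.mem_range'] at hy
    obtain ⟨t, ht, rfl⟩ := hy
    exact hcomm (m + 1) _ (by omega) (by omega) (by omega)
  have hb := hbraid m (by omega) (by omega)
  calc a m * descProd a (i + 1) j
      = descProd a (i + 1) (m + 2) * (a m * (a (m + 1) * a m) * descProd a (m - 1) j) := by
        rw [hsplit, ← mul_assoc, hU.eq]; simp [mul_assoc]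
    _ = descProd a (i + 1) (m + 2) * (a (m + 1) * (a m * (a (m + 1) * descProd a (m - 1) j))) := by
        rw [show a m * (a (m + 1) * a m) = a (m + 1) * a m * a (m + 1) by
          rw [hb]; simp [mul_assoc]]
        simp [mul_assoc]
    _ = descProd a (i + 1) j * a (m + 1) := by
        rw [hL.eq, hsplit]; simp [mul_assoc]

lemma key_swap_pow (n : ℕ)
    (hbraid : ∀ i, 1 ≤ i → i + 1 ≤ n → a (i + 1) * a i * a (i + 1) = a i * a (i + 1) * a i)
    (hcomm : ∀ i j, 1 ≤ j → j + 2 ≤ i → i ≤ n → a i * a j = a j * a i)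
    (i j m q : ℕ) (hj : 1 ≤ j) (hm1 : j ≤ m) (hm2 : m ≤ i) (hin : i + 1 ≤ n) :
    a m ^ q * descProd a (i + 1) j = descProd a (i + 1) j * a (m + 1) ^ q := by
  induction q with
  | zero => simp
  | succ q ih =>
      rw [pow_succ, pow_succ, mul_assoc,
        key_swap a n hbraid hcomm i j m hj hm1 hm2 hin, ← mul_assoc, ih, mul_assoc]

lemma list_shift (n : ℕ)
    (hbraid : ∀ i, 1 ≤ i → i + 1 ≤ n → a (i + 1) * a i * a (i + 1) = a i * a (i + 1) * a i)
    (hcomm : ∀ i j, 1 ≤ j → j + 2 ≤ i → i ≤ n → a i * a j = a j * a i)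
    (i j : ℕ) (hj : 1 ≤ j) (hin : i + 1 ≤ n) (f : ℕ → ℕ) :
    ∀ L : List ℕ, (∀ x ∈ L, j ≤ x ∧ x ≤ i) →
    (L.map (fun m => a m ^ f m)).prod * descProd a (i + 1) j
      = descProd a (i + 1) j * (L.map (fun m => a (m + 1) ^ f m)).prod := by
  intro L
  induction L with
  | nil => simp
  | cons m L ih =>
      intro h
      obtain ⟨h1, h2⟩ := h m (List.mem_cons_self (a := m) (l := L))
      simp only [List.map_cons, List.prod_cons]
      rw [mul_assoc, ih (fun x hx => h x (List.mem_cons_of_mem m hx)), ← mul_assoc,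
        key_swap_pow a n hbraid hcomm i j m (f m) hj h1 h2 hin, mul_assoc]

end Aux

/-- In the braid monoid B_{n+1}⁺, for 2 ≤ j ≤ i+1 ≤ n and positive exponents p:
a_i^{p₀} ⋯ a_{j-1}^{p_{i-j+1}} · a_{i+1,j-1} = a_{i+1,j-1} · a_{i+1}^{p₀} ⋯ a_j^{p_{i-j+1}}. -/
theorem braid_monoid_desc_pow_shift {M : Type*} [Monoid M] (n : ℕ) (a : ℕ → M)
    (hbraid : ∀ i, 1 ≤ i → i + 1 ≤ n → a (i + 1) * a i * a (i + 1) = a i * a (i + 1) * a i)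
    (hcomm : ∀ i j, 1 ≤ j → j + 2 ≤ i → i ≤ n → a i * a j = a j * a i)
    (i j : ℕ) (p : ℕ → ℕ) (hp : ∀ t, t ≤ i - j + 1 → 1 ≤ p t)
    (hj : 2 ≤ j) (hji : j ≤ i + 1) (hin : i + 1 ≤ n) :
    descPow a p i (j - 1) * descProd a (i + 1) (j - 1)
      = descProd a (i + 1) (j - 1) * descPow a p (i + 1) j := by
  have key := list_shift a n hbraid hcomm i (j - 1) (by omega) hin (fun m => p (i - m))
    ((List.range' (j - 1) (i + 1 - (j - 1))).reverse)
    (by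
      intro x hx
      rw [List.mem_reverse, List.mem_range'] at hx
      obtain ⟨t, ht, rfl⟩ := hx
      omega)
  have hL : descPow a p i (j - 1)
      = (((List.range' (j - 1) (i + 1 - (j - 1))).reverse).map
          (fun m => a m ^ p (i - m))).prod := rfl
  have hR : descPow a p (i + 1) j
      = (((List.range' (j - 1) (i + 1 - (j - 1))).reverse).map
          (fun m => a (m + 1) ^ p (i - m))).prod := by
    unfold descPow
    have hmap : List.range' j (i + 1 + 1 - j)
        = (List.range' (j - 1) (i + 1 - (j - 1))).map (fun x => 1 + x) := by
      rw [List.map_add_range', show 1 + (j - 1) = j by omega,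
        show i + 1 - (j - 1) = i + 1 + 1 - j by omega]
    rw [hmap, ← List.map_reverse, List.map_map]
    congr 1
    apply List.map_congr_left
    intro x hx
    rw [List.mem_reverse, List.mem_range'] at hx
    obtain ⟨t, ht, rfl⟩ := hx
    simp only [Function.comp]
    rw [show 1 + (j - 1 + 1 * t) = (j - 1 + 1 * t) + 1 by omega,
      show i + 1 - (j - 1 + 1 * t + 1) = i - (j - 1 + 1 * t) by omega]
  rw [hL, hR]
  exact key
end

section
/- In the braid group B_4 (generators a_1, a_2, a_3), the relation a_3 a_2^l a_1^m a_3 a_2 a_1 = a_2 a_3 a_2^2 a_1 a_3^{l-1} a_2^m holds for all l ≥ 2 and m ≥ 1. -/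
private lemma braid_pow {G : Type*} [Group G] (u v : G)
    (h : v * u * v = u * v * u) (m : ℕ) : u ^ m * v * u = v * u * v ^ m := by
  induction m with
  | zero => simp
  | succ n ih =>
    calc u ^ (n + 1) * v * u = u * (u ^ n * v * u) := by
          rw [pow_succ']; group
      _ = u * (v * u * v ^ n) := by rw [ih]
      _ = (u * v * u) * v ^ n := by group
      _ = (v * u * v) * v ^ n := by rw [h]
      _ = v * u * v ^ (n + 1) := by rw [pow_succ]; group

/-- In B₄ (generators a₁, a₂, a₃), for l ≥ 2 and m ≥ 1:
a₃ a₂^l a₁^m a₃ a₂ a₁ = a₂ a₃ a₂² a₁ a₃^(l-1) a₂^m. -/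
theorem braid4_gs_relation {G : Type*} [Group G] (a1 a2 a3 : G)
    (h12 : a2 * a1 * a2 = a1 * a2 * a1) (h23 : a3 * a2 * a3 = a2 * a3 * a2)
    (h13 : a3 * a1 = a1 * a3) (l m : ℕ) (hl : 2 ≤ l) (hm : 1 ≤ m) :
    a3 * a2 ^ l * a1 ^ m * a3 * a2 * a1
      = a2 * a3 * a2 ^ 2 * a1 * a3 ^ (l - 1) * a2 ^ m := by
  obtain ⟨k, rfl⟩ : ∃ k, l = k + 1 := ⟨l - 1, by omega⟩
  have c : Commute a3 a1 := h13
  have e1 : a1 ^ m * a3 = a3 * a1 ^ m := (c.symm.pow_left m)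
  have e1' : a3 ^ k * a1 = a1 * a3 ^ k := (c.pow_left k)
  have e2 : a1 ^ m * a2 * a1 = a2 * a1 * a2 ^ m := braid_pow a1 a2 h12 m
  have e3 : a2 ^ (k + 1) * a3 * a2 = a3 * a2 * a3 ^ (k + 1) :=
    braid_pow a2 a3 h23 (k + 1)
  have e4 : a3 * (a3 * a2 * a3) = a2 * a3 * a2 ^ 2 := by
    rw [h23]; rw [show a3 * (a2 * a3 * a2) = (a3 * a2 * a3) * a2 by group, h23, sq,
      mul_assoc]
  calc a3 * a2 ^ (k + 1) * a1 ^ m * a3 * a2 * a1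
      = a3 * a2 ^ (k + 1) * (a1 ^ m * a3) * a2 * a1 := by group
    _ = a3 * a2 ^ (k + 1) * a3 * (a1 ^ m * a2 * a1) := by rw [e1]; group
    _ = a3 * a2 ^ (k + 1) * a3 * (a2 * a1 * a2 ^ m) := by rw [e2]
    _ = a3 * (a2 ^ (k + 1) * a3 * a2) * a1 * a2 ^ m := by group
    _ = a3 * (a3 * a2 * a3 ^ (k + 1)) * a1 * a2 ^ m := by rw [e3]
    _ = a3 * (a3 * a2 * a3) * ((a3 ^ k * a1) * a2 ^ m) := by rw [pow_succ']; group
    _ = a3 * (a3 * a2 * a3) * (a1 * a3 ^ k * a2 ^ m) := by rw [e1']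
    _ = a2 * a3 * a2 ^ 2 * a1 * a3 ^ k * a2 ^ m := by rw [e4]; group
    _ = a2 * a3 * a2 ^ 2 * a1 * a3 ^ (k + 1 - 1) * a2 ^ m := by norm_num
end

section
/- In the braid group B_3, every element can be written in the form Δ^k v where k is an integer, v is a positive word in a_1, a_2 (possibly empty), and Δ = a_1 a_2 a_1; i.e., the subgroup-generating set {a_1, a_2} together with the invertibility of Δ gives B_3 = ∪_{k∈ℤ} Δ^k B_3^+ where B_3^+ is the submonoid generated by a_1, a_2. -/
/-- The braid relation of B₃ as a relator in the free group on two generators: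
a₂ a₁ a₂ (a₁ a₂ a₁)⁻¹, with a₁ = of false, a₂ = of true. -/
def braid3Rels : Set (FreeGroup Bool) :=
  {FreeGroup.of true * FreeGroup.of false * FreeGroup.of true *
    (FreeGroup.of false * FreeGroup.of true * FreeGroup.of false)⁻¹}

/-- The braid group B₃ presented by generators a₁, a₂ and relation
a₂a₁a₂ = a₁a₂a₁. -/
abbrev Braid3 : Type := PresentedGroup braid3Rels

namespace Braid3Aux

noncomputable abbrev a (b : Bool) : Braid3 := PresentedGroup.of (rels := braid3Rels) b

noncomputable def Δ : Braid3 := a false * a true * a false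

lemma delta_def : Δ = a false * a true * a false := rfl

noncomputable abbrev M : Submonoid Braid3 := Submonoid.closure {a false, a true}

lemma braid_rel : a true * a false * a true = a false * a true * a false := by
  have h : PresentedGroup.mk braid3Rels
      (FreeGroup.of true * FreeGroup.of false * FreeGroup.of true *
        (FreeGroup.of false * FreeGroup.of true * FreeGroup.of false)⁻¹) = 1 := by
    have : (FreeGroup.of true * FreeGroup.of false * FreeGroup.of true *
        (FreeGroup.of false * FreeGroup.of true * FreeGroup.of false)⁻¹) ∈
        Subgroup.normalClosure braid3Rels :=
      Subgroup.subset_normalClosure rfl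
    exact (QuotientGroup.eq_one_iff _).mpr this
  simp only [map_mul, map_inv] at h
  have h' := mul_eq_one_iff_eq_inv.mp h
  rw [inv_inv] at h'
  exact h'

lemma delta_eq : Δ = a true * a false * a true := by rw [delta_def]; exact braid_rel.symm

lemma af_mem : a false ∈ M := Submonoid.subset_closure (by simp)
lemma at_mem : a true ∈ M := Submonoid.subset_closure (by simp)
lemma delta_mem : Δ ∈ M := by rw [delta_def]; exact M.mul_mem (M.mul_mem af_mem at_mem) af_mem

lemma conj_false : Δ * a false * Δ⁻¹ = a true := by
  have : Δ * a false = a true * Δ := by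
    nth_rewrite 1 [delta_eq]; nth_rewrite 1 [delta_def]; simp [mul_assoc]
  rw [this]; group

lemma conj_true : Δ * a true * Δ⁻¹ = a false := by
  have : Δ * a true = a false * Δ := by
    nth_rewrite 2 [delta_eq]
    nth_rewrite 1 [delta_def]; simp [mul_assoc]
  rw [this]; group

lemma conj_false' : Δ⁻¹ * a false * Δ = a true := by
  have := conj_true
  rw [← this]; group

lemma conj_true' : Δ⁻¹ * a true * Δ = a false := by
  have := conj_false
  rw [← this]; group

lemma conj_mem_pos {v : Braid3} (hv : v ∈ M) : Δ * v * Δ⁻¹ ∈ M := by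
  induction hv using Submonoid.closure_induction with
  | mem x hx =>
    rcases hx with h | h
    · rw [h, conj_false]; exact at_mem
    · rw [h, conj_true]; exact af_mem
  | one =>
    have h1 : Δ * 1 * Δ⁻¹ = 1 := by group
    rw [h1]; exact M.one_mem
  | mul x y _ _ hx hy =>
    have : Δ * (x * y) * Δ⁻¹ = (Δ * x * Δ⁻¹) * (Δ * y * Δ⁻¹) := by group
    rw [this]; exact M.mul_mem hx hy

lemma conj_mem_neg {v : Braid3} (hv : v ∈ M) : Δ⁻¹ * v * Δ ∈ M := by
  induction hv using Submonoid.closure_induction with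
  | mem x hx =>
    rcases hx with h | h
    · rw [h, conj_false']; exact at_mem
    · rw [h, conj_true']; exact af_mem
  | one =>
    have h1 : Δ⁻¹ * 1 * Δ = 1 := by group
    rw [h1]; exact M.one_mem
  | mul x y _ _ hx hy =>
    have : Δ⁻¹ * (x * y) * Δ = (Δ⁻¹ * x * Δ) * (Δ⁻¹ * y * Δ) := by group
    rw [this]; exact M.mul_mem hx hy

lemma conj_mem_zpow (m : ℤ) {v : Braid3} (hv : v ∈ M) : Δ ^ m * v * Δ ^ (-m) ∈ M := by
  induction m using Int.induction_on with
  | zero => simpa using hv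
  | succ n ih =>
    have : Δ ^ ((n : ℤ) + 1) * v * Δ ^ (-((n : ℤ) + 1)) =
        Δ * (Δ ^ (n : ℤ) * v * Δ ^ (-(n : ℤ))) * Δ⁻¹ := by
      rw [zpow_add, zpow_neg, zpow_add, zpow_neg]; group
    rw [this]; exact conj_mem_pos ih
  | pred n ih =>
    have : Δ ^ (-(n : ℤ) - 1) * v * Δ ^ (-(-(n : ℤ) - 1)) =
        Δ⁻¹ * (Δ ^ (-(n : ℤ)) * v * Δ ^ (-(-(n : ℤ)))) * Δ := by
      rw [zpow_sub, zpow_neg, zpow_neg, zpow_sub, zpow_neg]; group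
    rw [this]; exact conj_mem_neg ih

lemma inv_decomp {v : Braid3} (hv : v ∈ M) :
    ∃ (m : ℤ) (w : Braid3), w ∈ M ∧ v⁻¹ = Δ ^ m * w := by
  induction hv using Submonoid.closure_induction with
  | mem x hx =>
    rcases hx with h | h
    · refine ⟨-1, a false * a true, M.mul_mem af_mem at_mem, ?_⟩
      rw [h, zpow_neg_one]
      have : Δ * (a false)⁻¹ = a false * a true := by rw [delta_def]; group
      rw [← this]; group
    · refine ⟨-1, a true * a false, M.mul_mem at_mem af_mem, ?_⟩
      rw [h, zpow_neg_one]
      have : Δ * (a true)⁻¹ = a true * a false := by rw [delta_eq]; group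
      rw [← this]; group
  | one => exact ⟨0, 1, M.one_mem, by simp⟩
  | mul x y _ _ hx hy =>
    obtain ⟨m, w, hw, hxw⟩ := hx
    obtain ⟨m', w', hw', hyw'⟩ := hy
    refine ⟨m' + m, (Δ ^ (-m) * w' * Δ ^ m) * w,
      M.mul_mem (by simpa using conj_mem_zpow (-m) hw') hw, ?_⟩
    rw [mul_inv_rev, hxw, hyw', zpow_add]
    group

end Braid3Aux

open Braid3Aux in
/-- Every element of B₃ can be written as Δᵏ v with k ∈ ℤ and v a positive word
in a₁, a₂ (an element of the submonoid B₃⁺ generated by a₁ and a₂),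
where Δ = a₁ a₂ a₁. -/
theorem braid3_garside_decomposition (g : Braid3) :
    ∃ (k : ℤ) (v : Braid3),
      v ∈ Submonoid.closure
        {PresentedGroup.of (rels := braid3Rels) false,
         PresentedGroup.of (rels := braid3Rels) true} ∧
      g = (PresentedGroup.of (rels := braid3Rels) false *
            PresentedGroup.of (rels := braid3Rels) true *
            PresentedGroup.of (rels := braid3Rels) false) ^ k * v := by
  show ∃ (k : ℤ) (v : Braid3), v ∈ M ∧ g = Δ ^ k * v
  have hg : g ∈ Subgroup.closure (Set.range (PresentedGroup.of (rels := braid3Rels))) := by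
    rw [PresentedGroup.closure_range_of]; trivial
  induction hg using Subgroup.closure_induction with
  | mem x hx =>
    obtain ⟨b, rfl⟩ := hx
    cases b
    · exact ⟨0, a false, af_mem, by simp⟩
    · exact ⟨0, a true, at_mem, by simp⟩
  | one => exact ⟨0, 1, M.one_mem, by simp⟩
  | mul x y _ _ hx hy =>
    obtain ⟨k, v, hv, rfl⟩ := hx
    obtain ⟨k', v', hv', rfl⟩ := hy
    refine ⟨k + k', (Δ ^ (-k') * v * Δ ^ k') * v',
      M.mul_mem (by simpa using conj_mem_zpow (-k') hv) hv', ?_⟩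
    rw [zpow_add]; group
  | inv x _ hx =>
    obtain ⟨k, v, hv, rfl⟩ := hx
    obtain ⟨m, w, hw, hvw⟩ := inv_decomp hv
    refine ⟨m - k, (Δ ^ k * w * Δ ^ (-k)), conj_mem_zpow k hw, ?_⟩
    rw [mul_inv_rev, hvw, zpow_sub]
    group
end

section
/- In the braid group B_3 with generators a_1 < a_2 and deg-lex order on words, the set S = { a_2 a_1 a_2 − a_1 a_2 a_1 } ∪ { a_2 a_1^l a_2 a_1 − a_1 a_2 a_1^2 a_2^{l-1} : l ≥ 2 } is closed under the composition on the ambiguity w = a_2 a_1 a_2 a_1 a_2: the composition of the first relation with itself on w reduces to zero modulo S. -/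
/-- The deg-lex order on words in the letters a₁ < a₂ (encoded as lists of
booleans, `false` for a₁, `true` for a₂): first compare lengths, then
lexicographically. -/
def DegLexWords (l m : List Bool) : Prop :=
  l.length < m.length ∨ (l.length = m.length ∧ List.Lex (· < ·) l m)

/-- In the free algebra k⟨a₁, a₂⟩, the composition of intersection of
f = a₂a₁a₂ − a₁a₂a₁ with itself on the ambiguity w = a₂a₁a₂a₁a₂, namely
(f,f)_w = f·a₁a₂ − a₂a₁·f, equals the element
g = a₂a₁²a₂a₁ − a₁a₂a₁²a₂ of S (the l = 2 relation), whose leading word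
a₂a₁²a₂a₁ is smaller than w in the deg-lex order; hence the composition
reduces to zero modulo S with all intermediate leading monomials < w. -/
theorem braid3_composition_reduces (k : Type*) [Field k] :
    (let a1 : FreeAlgebra k Bool := FreeAlgebra.ι k false
     let a2 : FreeAlgebra k Bool := FreeAlgebra.ι k true
     let f := a2 * a1 * a2 - a1 * a2 * a1
     f * (a1 * a2) - (a2 * a1) * f
       = (a2 * a1 * a1 * a2 * a1 - a1 * a2 * a1 * a1 * a2)) ∧
    DegLexWords [true, false, false, true, false] [true, false, true, false, true] := by
  constructor
  · intro a1 a2 f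
    simp only [f]
    noncomm_ring
  · right
    exact ⟨rfl, by decide⟩
end
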